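/- arXiv:2312.05088 — 3 statements merged into one kernel-verified Lean document; each statement's English description precedes it below -/
import Mathlib

section
/- Let p, p₁, p₂, q, q₁, q₂ : ℝⁿ → [1,∞] be measurable with 1/p = 1/p₁ + 1/p₂ and 1/q = 1/q₁ + 1/q₂ pointwise. Then for sequences (f_j)_j and (g_j)_j of measurable functions, ‖(f_j g_j)_j‖_{ℓ^{q(·)}(L^{p(·)})} ≲ ‖(f_j)_j‖_{ℓ^{q₁(·)}(L^{p₁(·)})} ‖(g_j)_j‖_{ℓ^{q₂(·)}(L^{p₂(·)})}. -/
open MeasureTheory ENNReal Filter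
open scoped SchwartzMap FourierTransform

noncomputable section

/-- Euclidean space ℝⁿ. -/
abbrev En (n : ℕ) := EuclideanSpace ℝ (Fin n)

/-- `ω_p(t)`: `t^p` for finite `p`; for `p = ∞` it is `0` if `t ≤ 1` and `∞` otherwise. -/
def omegaP (p t : ℝ≥0∞) : ℝ≥0∞ :=
  if p = ∞ then (if t ≤ 1 then 0 else ∞) else t ^ p.toReal

/-- Variable exponent modular `ρ_{p(·)}` on nonnegative (ℝ≥0∞-valued) functions. -/
def rhoP {n : ℕ} (p : En n → ℝ≥0∞) (F : En n → ℝ≥0∞) : ℝ≥0∞ :=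
  ∫⁻ x, omegaP (p x) (F x)

/-- Luxemburg norm for the variable exponent Lebesgue space. -/
def luxNorm {n : ℕ} (p : En n → ℝ≥0∞) (F : En n → ℝ≥0∞) : ℝ≥0∞ :=
  sInf {l : ℝ≥0∞ | 0 < l ∧ rhoP p (fun x => F x / l) ≤ 1}

/-- The nonnegative absolute value of a real function, as an ℝ≥0∞-valued function. -/
def nnAbs {n : ℕ} (f : En n → ℝ) : En n → ℝ≥0∞ := fun x => ENNReal.ofReal |f x|

/-- Modular of the mixed Lebesgue-sequence space `ℓ^{q(·)}(L^{p(·)})`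
(convention `λ^{1/∞} = λ^0 = 1`). -/
def mixedModular {n : ℕ} (q p : En n → ℝ≥0∞) (F : ℕ → En n → ℝ≥0∞) : ℝ≥0∞ :=
  ∑' j, sInf {l : ℝ≥0∞ | 0 < l ∧ rhoP p (fun x => F j x / l ^ ((q x)⁻¹).toReal) ≤ 1}

/-- Quasi-norm of the mixed Lebesgue-sequence space `ℓ^{q(·)}(L^{p(·)})`. -/
def mixedNorm {n : ℕ} (q p : En n → ℝ≥0∞) (F : ℕ → En n → ℝ≥0∞) : ℝ≥0∞ :=
  sInf {m : ℝ≥0∞ | 0 < m ∧ mixedModular q p (fun j x => F j x / m) ≤ 1}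

/-- `g` is locally log-Hölder continuous with constant `c`. -/
def LocLogHolder {n : ℕ} (c : ℝ) (g : En n → ℝ) : Prop :=
  0 < c ∧ ∀ x y : En n, |g x - g y| ≤ c / Real.log (Real.exp 1 + 1 / ‖x - y‖)

/-- `g ∈ C^log_loc(ℝⁿ)`. -/
def ClogLoc {n : ℕ} (g : En n → ℝ) : Prop := ∃ c, LocLogHolder c g

/-- `g` is globally log-Hölder continuous: locally log-Hölder plus the log-Hölder
decay condition at infinity. -/
def GlobLogHolder {n : ℕ} (g : En n → ℝ) : Prop :=
  ClogLoc g ∧ ∃ c g_inf : ℝ, 0 < c ∧ ∀ x : En n, |g x - g_inf| ≤ c / Real.log (Real.exp 1 + ‖x‖)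

/-- A measurable variable exponent `p : ℝⁿ → [1,∞]`. -/
def IsExponent {n : ℕ} (p : En n → ℝ≥0∞) : Prop := Measurable p ∧ ∀ x, 1 ≤ p x

/-- `p ∈ 𝒫^log(ℝⁿ)`: a variable exponent with `1/p` globally log-Hölder continuous. -/
def Plog {n : ℕ} (p : En n → ℝ≥0∞) : Prop :=
  IsExponent p ∧ GlobLogHolder (fun x => ((p x)⁻¹).toReal)

/-- Convolution of two real functions. -/
def conv {n : ℕ} (φ f : En n → ℝ) (x : En n) : ℝ := ∫ y, φ (x - y) * f y

/-- Partial derivative in the `k`-th coordinate direction. -/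
def pderiv {n : ℕ} (k : Fin n) (f : En n → ℝ) (x : En n) : ℝ :=
  fderiv ℝ f x (EuclideanSpace.single k 1)

/-- Besov quasi-norm with variable smoothness and integrability, relative to a
system `(φ_j)_j`. -/
def besovNorm {n : ℕ} (φ : ℕ → En n → ℝ) (s : En n → ℝ) (q p : En n → ℝ≥0∞)
    (g : En n → ℝ) : ℝ≥0∞ :=
  mixedNorm q p (fun j x => ENNReal.ofReal ((2:ℝ) ^ ((j:ℝ) * s x) * |conv (φ j) g x|))

/-- A smooth dyadic resolution of unity `(ℱφ_j)_j`. -/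
structure DyadicResolution (n : ℕ) where
  φ : ℕ → 𝓢(En n, ℝ)
  supp_zero : ∀ ξ : En n, 2 < ‖ξ‖ → 𝓕 (fun y => (φ 0 y : ℂ)) ξ = 0
  supp_pos : ∀ j : ℕ, 0 < j → ∀ ξ : En n,
      (‖ξ‖ < (2:ℝ) ^ ((j:ℤ) - 1) ∨ (2:ℝ) ^ ((j:ℤ) + 1) < ‖ξ‖) →
      𝓕 (fun y => (φ j y : ℂ)) ξ = 0
  sum_one : ∀ ξ : En n, ∑' j, 𝓕 (fun y => (φ j y : ℂ)) ξ = 1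

/-- The commutator `[V·∇, Δ_j]f` relative to a convolution kernel `φj`. -/
def commVf {n : ℕ} (φj : En n → ℝ) (V : Fin n → En n → ℝ) (f : En n → ℝ)
    (x : En n) : ℝ :=
  ∑ k, (V k x * pderiv k (conv φj f) x - conv φj (fun y => V k y * pderiv k f y) x)

end

namespace Stmt9Aux
open MeasureTheory ENNReal NNReal

lemma toReal_inv_le_one {q : ℝ≥0∞} (hq : 1 ≤ q) : (q⁻¹).toReal ≤ 1 := by
  have h : q⁻¹ ≤ 1 := by simpa using ENNReal.inv_le_inv.mpr hq
  simpa using ENNReal.toReal_mono one_ne_top h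

lemma one_le_toReal {p : ℝ≥0∞} (hp : 1 ≤ p) (ht : p ≠ ∞) : 1 ≤ p.toReal := by
  simpa using ENNReal.toReal_mono ht hp

lemma omegaP_zero {p : ℝ≥0∞} (hp : 1 ≤ p) : omegaP p 0 = 0 := by
  unfold omegaP
  split_ifs with h h1
  · rfl
  · exact absurd zero_le_one h1
  · exact ENNReal.zero_rpow_of_pos (lt_of_lt_of_le one_pos (one_le_toReal hp h))

lemma omegaP_mono {p t t' : ℝ≥0∞} (h : t ≤ t') : omegaP p t ≤ omegaP p t' := by
  unfold omegaP
  by_cases hp : p = ⊤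
  · simp only [hp, if_true]
    by_cases h2 : t' ≤ 1
    · rw [if_pos (h.trans h2), if_pos h2]
    · split_ifs <;> simp
  · simp only [hp, if_false]
    exact ENNReal.rpow_le_rpow h ENNReal.toReal_nonneg

lemma le_omegaP {p t : ℝ≥0∞} (hp : 1 ≤ p) (ht : 1 < t) : t ≤ omegaP p t := by
  unfold omegaP
  split_ifs with hptop h1
  · exact absurd h1 (not_le.mpr ht)
  · exact le_top
  · calc t = t ^ (1:ℝ) := (ENNReal.rpow_one t).symm
    _ ≤ t ^ p.toReal := ENNReal.rpow_le_rpow_of_exponent_le ht.le (one_le_toReal hp hptop)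

lemma omegaP_half {p : ℝ≥0∞} (hp : 1 ≤ p) (t : ℝ≥0∞) : omegaP p (t / 2) ≤ omegaP p t / 2 := by
  unfold omegaP
  by_cases hptop : p = ⊤
  · simp only [hptop, if_true]
    by_cases h1 : t / 2 ≤ 1
    · rw [if_pos h1]; exact zero_le
    · have h2 : ¬ t ≤ 1 := fun h => h1 (ENNReal.half_le_self.trans h)
      rw [if_neg h1, if_neg h2, ENNReal.top_div_of_ne_top (by norm_num)]
  · simp only [hptop, if_false]
    rw [ENNReal.div_rpow_of_nonneg t 2 ENNReal.toReal_nonneg]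
    refine ENNReal.div_le_div_left ?_ _
    calc (2:ℝ≥0∞) = 2 ^ (1:ℝ) := (ENNReal.rpow_one 2).symm
    _ ≤ 2 ^ p.toReal := ENNReal.rpow_le_rpow_of_exponent_le one_le_two (one_le_toReal hp hptop)

/-- if `x ≤ c`, `1 ≤ c`, `0 ≤ e ≤ 1` then `x ^ e ≤ c`. -/
lemma rpow_le_of_le {x c : ℝ≥0∞} {e : ℝ} (hx : x ≤ c) (hc : 1 ≤ c) (he0 : 0 ≤ e)
    (he1 : e ≤ 1) : x ^ e ≤ c := by
  by_cases h1 : x ≤ 1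
  · calc x ^ e ≤ 1 ^ e := ENNReal.rpow_le_rpow h1 he0
    _ = 1 := ENNReal.one_rpow e
    _ ≤ c := hc
  · calc x ^ e ≤ x ^ (1:ℝ) :=
        ENNReal.rpow_le_rpow_of_exponent_le (le_of_not_ge h1) he1
    _ = x := ENNReal.rpow_one x
    _ ≤ c := hx

end Stmt9Aux
namespace Stmt9Aux

lemma omegaP_young {p p₁ p₂ : ℝ≥0∞} (hp₁ : 1 ≤ p₁) (hp₂ : 1 ≤ p₂)
    (hsum : p⁻¹ = p₁⁻¹ + p₂⁻¹) (u v : ℝ≥0∞) :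
    omegaP p (u * v) ≤ omegaP p₁ u + omegaP p₂ v := by
  by_cases h1 : p₁ = ∞
  · by_cases h2 : p₂ = ∞
    · have hptop : p = ∞ := by
        rw [h1, h2] at hsum; simp at hsum; exact hsum
      simp only [omegaP, hptop, h1, h2, if_true]
      by_cases hu : u ≤ 1
      · by_cases hv : v ≤ 1
        · rw [if_pos (mul_le_one' hu hv)]; exact zero_le
        · rw [if_neg hv]; exact le_top.trans le_add_self
      · rw [if_neg hu]; exact le_top.trans le_self_add
    · have hpp : p = p₂ := by
        rw [h1] at hsum; simp at hsum
        have := congrArg (·⁻¹) hsum; simpa using this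
      by_cases hu : u ≤ 1
      · have : u * v ≤ v := by calc u * v ≤ 1 * v := mul_le_mul_left hu v
          _ = v := one_mul v
        calc omegaP p (u * v) ≤ omegaP p₂ v := hpp ▸ omegaP_mono this
        _ ≤ omegaP p₁ u + omegaP p₂ v := le_add_self
      · have : omegaP p₁ u = ∞ := by simp [omegaP, h1, hu]
        rw [this]; simp
  · by_cases h2 : p₂ = ∞
    · have hpp : p = p₁ := by
        rw [h2] at hsum; simp at hsum
        have := congrArg (·⁻¹) hsum; simpa using this
      by_cases hv : v ≤ 1
      · have : u * v ≤ u := by calc u * v ≤ u * 1 := mul_le_mul_right hv u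
          _ = u := mul_one u
        calc omegaP p (u * v) ≤ omegaP p₁ u := hpp ▸ omegaP_mono this
        _ ≤ omegaP p₁ u + omegaP p₂ v := le_self_add
      · have : omegaP p₂ v = ∞ := by simp [omegaP, h2, hv]
        rw [this]; simp
    -- both finite
    · have hp₁0 : p₁ ≠ 0 := fun h => by simp [h] at hp₁
      have hp₂0 : p₂ ≠ 0 := fun h => by simp [h] at hp₂
      have hptop : p ≠ ∞ := by
        intro h; rw [h] at hsum; simp at hsum
        have h0 := hsum.symm
        rw [add_eq_zero] at h0
        exact h1 (ENNReal.inv_eq_zero.mp h0.1)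
      have hp0 : p ≠ 0 := by
        intro h; rw [h] at hsum; simp at hsum
        have h0 := hsum.symm
        rw [ENNReal.add_eq_top] at h0
        rcases h0 with h0 | h0
        · exact hp₁0 (ENNReal.inv_eq_top.mp h0)
        · exact hp₂0 (ENNReal.inv_eq_top.mp h0)
      set r := p.toReal with hr
      set r₁ := p₁.toReal with hr₁
      set r₂ := p₂.toReal with hr₂
      have hr1 : 1 ≤ r₁ := one_le_toReal hp₁ h1
      have hr2 : 1 ≤ r₂ := one_le_toReal hp₂ h2
      have hrpos : 0 < r := ENNReal.toReal_pos hp0 hptop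
      have hrel : r⁻¹ = r₁⁻¹ + r₂⁻¹ := by
        have := congrArg ENNReal.toReal hsum
        rwa [ENNReal.toReal_add (ENNReal.inv_ne_top.mpr hp₁0) (ENNReal.inv_ne_top.mpr hp₂0),
          ENNReal.toReal_inv, ENNReal.toReal_inv, ENNReal.toReal_inv] at this
      simp only [omegaP, h1, h2, hptop, if_false]
      -- degenerate cases
      rcases eq_or_ne u 0 with rfl | hu0
      · rw [zero_mul, ENNReal.zero_rpow_of_pos hrpos]; exact zero_le
      rcases eq_or_ne v 0 with rfl | hv0
      · rw [mul_zero, ENNReal.zero_rpow_of_pos hrpos]; exact zero_le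
      rcases eq_or_ne u ∞ with rfl | hut
      · have : (⊤:ℝ≥0∞) ^ r₁ = ∞ := ENNReal.top_rpow_of_pos (by linarith)
        rw [this]; simp
      rcases eq_or_ne v ∞ with rfl | hvt
      · have : (⊤:ℝ≥0∞) ^ r₂ = ∞ := ENNReal.top_rpow_of_pos (by linarith)
        rw [this]; simp
      -- main case
      have hrr1 : r < r₁ := by
        have h2' : 0 < r₂⁻¹ := by positivity
        have : r₁⁻¹ < r⁻¹ := by rw [hrel]; linarith
        have := (inv_lt_inv₀ (by positivity) (by positivity)).mp this
        exact this
      have hs : (r₁/r).HolderConjugate (r₂/r) := by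
        rw [Real.holderConjugate_iff]; constructor
        · rw [lt_div_iff₀ hrpos]; linarith
        · rw [inv_div, inv_div]
          have : r / r₁ + r / r₂ = r * (r₁⁻¹ + r₂⁻¹) := by ring
          rw [this, ← hrel, mul_inv_cancel₀ (ne_of_gt hrpos)]
      have key := ENNReal.young_inequality (u ^ r) (v ^ r) hs
      have e1 : (u ^ r) ^ (r₁ / r) = u ^ r₁ := by
        rw [← ENNReal.rpow_mul, mul_comm, div_mul_cancel₀ _ (ne_of_gt hrpos)]
      have e2 : (v ^ r) ^ (r₂ / r) = v ^ r₂ := by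
        rw [← ENNReal.rpow_mul, mul_comm, div_mul_cancel₀ _ (ne_of_gt hrpos)]
      rw [e1, e2] at key
      have d1 : u ^ r₁ / ENNReal.ofReal (r₁ / r) ≤ u ^ r₁ := by
        calc u ^ r₁ / ENNReal.ofReal (r₁ / r) ≤ u ^ r₁ / 1 :=
          ENNReal.div_le_div_left (ENNReal.one_le_ofReal.mpr hs.lt.le) _
        _ = u ^ r₁ := div_one _
      have d2 : v ^ r₂ / ENNReal.ofReal (r₂ / r) ≤ v ^ r₂ := by
        calc v ^ r₂ / ENNReal.ofReal (r₂ / r) ≤ v ^ r₂ / 1 :=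
          ENNReal.div_le_div_left (ENNReal.one_le_ofReal.mpr hs.symm.lt.le) _
        _ = v ^ r₂ := div_one _
      calc (u * v) ^ r = u ^ r * v ^ r := ENNReal.mul_rpow_of_nonneg u v hrpos.le
      _ ≤ u ^ r₁ / ENNReal.ofReal (r₁ / r) + v ^ r₂ / ENNReal.ofReal (r₂ / r) := key
      _ ≤ u ^ r₁ + v ^ r₂ := add_le_add d1 d2
end Stmt9Aux
namespace Stmt9Aux
open MeasureTheory ENNReal NNReal

lemma measurable_omegaP {α : Type*} [MeasurableSpace α] {p U : α → ℝ≥0∞}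
    (hp : Measurable p) (hU : Measurable U) :
    Measurable fun x => omegaP (p x) (U x) := by
  unfold omegaP
  refine Measurable.ite (hp (measurableSet_singleton ∞)) ?_ (hU.pow hp.ennreal_toReal)
  exact Measurable.ite (hU measurableSet_Iic) measurable_const measurable_const

lemma div_div (a : ℝ≥0∞) {c d : ℝ≥0∞} (hc0 : c ≠ 0) (hct : c ≠ ∞) (hd0 : d ≠ 0)
    (hdt : d ≠ ∞) : a / c / d = a / (c * d) := by
  rw [div_eq_mul_inv, div_eq_mul_inv, div_eq_mul_inv, mul_assoc,
    ENNReal.mul_inv (Or.inl hc0) (Or.inl hct)]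

lemma div_mul_div (a b : ℝ≥0∞) {c d : ℝ≥0∞} (hc0 : c ≠ 0) (hct : c ≠ ∞) (hd0 : d ≠ 0)
    (hdt : d ≠ ∞) : (a / c) * (b / d) = (a * b) / (c * d) := by
  rw [div_eq_mul_inv, div_eq_mul_inv, div_eq_mul_inv,
    ENNReal.mul_inv (Or.inl hc0) (Or.inl hct)]
  ring

lemma rhoP_mono {n : ℕ} (p : En n → ℝ≥0∞) {F G : En n → ℝ≥0∞} (h : ∀ x, F x ≤ G x) :
    rhoP p F ≤ rhoP p G :=
  lintegral_mono fun x => omegaP_mono (h x)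

lemma rhoP_zero_of_ae {n : ℕ} {p : En n → ℝ≥0∞} (hp : ∀ x, 1 ≤ p x) {F : En n → ℝ≥0∞}
    (h : ∀ᵐ x, F x = 0) : rhoP p F = 0 := by
  unfold rhoP
  rw [← lintegral_zero]
  refine lintegral_congr_ae ?_
  filter_upwards [h] with x hx
  rw [hx, omegaP_zero (hp x)]

lemma sInf_eq_zero_of_mem {S : Set ℝ≥0∞} (h : ∀ l : ℝ≥0∞, 0 < l → l ∈ S) : sInf S = 0 := by
  refine le_antisymm ?_ (zero_le)
  refine ENNReal.le_of_forall_pos_le_add fun ε hε _ => ?_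
  rw [zero_add]
  exact sInf_le (h ε (by exact_mod_cast hε))

/-- If each component is a.e. zero, the mixed norm vanishes. -/
lemma mixedNorm_zero_of_ae {n : ℕ} (q p : En n → ℝ≥0∞) (hp : ∀ x, 1 ≤ p x)
    {F : ℕ → En n → ℝ≥0∞} (hF : ∀ j, ∀ᵐ x, F j x = 0) : mixedNorm q p F = 0 := by
  unfold mixedNorm
  refine sInf_eq_zero_of_mem fun m hm => ⟨hm, ?_⟩
  unfold mixedModular
  have hz : ∀ j, sInf {l : ℝ≥0∞ | 0 < l ∧
      rhoP p (fun x => F j x / m / l ^ ((q x)⁻¹).toReal) ≤ 1} = 0 := by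
    intro j
    refine sInf_eq_zero_of_mem fun l hl => ⟨hl, ?_⟩
    have : rhoP p (fun x => F j x / m / l ^ ((q x)⁻¹).toReal) = 0 := by
      refine rhoP_zero_of_ae hp ?_
      filter_upwards [hF j] with x hx
      rw [hx]; simp
    rw [this]; exact zero_le_one
  simp only [hz, tsum_zero]
  exact zero_le_one

end Stmt9Aux
namespace Stmt9Aux
open MeasureTheory ENNReal NNReal

lemma toReal_inv_mem {q : ℝ≥0∞} (hq : 1 ≤ q) :
    0 ≤ (q⁻¹).toReal ∧ (q⁻¹).toReal ≤ 1 :=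
  ⟨ENNReal.toReal_nonneg, toReal_inv_le_one hq⟩

/-- If the mixed norm vanishes, each component vanishes a.e. -/
lemma ae_zero_of_mixedNorm_zero {n : ℕ} {q p : En n → ℝ≥0∞}
    (hq1 : ∀ x, 1 ≤ q x) (hp1 : ∀ x, 1 ≤ p x)
    {F : ℕ → En n → ℝ≥0∞} (hF : ∀ j, Measurable (F j))
    (h : mixedNorm q p F = 0) (j : ℕ) : ∀ᵐ x, F j x = 0 := by
  -- Step 1
  have step1 : ∀ δ : ℝ≥0∞, 0 < δ → δ ≠ ∞ →
      rhoP p (fun x => F j x / (2 * δ)) ≤ 1 := by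
    intro δ hδ0 hδt
    have hlt : sInf {m : ℝ≥0∞ | 0 < m ∧
        mixedModular q p (fun j x => F j x / m) ≤ 1} < δ := by
      rw [← h] at hδ0; exact hδ0
    obtain ⟨m, ⟨hm0, hmod⟩, hmδ⟩ := sInf_lt_iff.mp hlt
    have hterm : sInf {l : ℝ≥0∞ | 0 < l ∧
        rhoP p (fun x => F j x / m / l ^ ((q x)⁻¹).toReal) ≤ 1} < 2 :=
      lt_of_le_of_lt (le_trans (ENNReal.le_tsum j) hmod) one_lt_two
    obtain ⟨l, ⟨hl0, hrho⟩, hl2⟩ := sInf_lt_iff.mp hterm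
    refine le_trans (rhoP_mono p fun x => ?_) hrho
    have hmt : m ≠ ∞ := (hmδ.trans_le le_top).ne
    have hle : (l : ℝ≥0∞) ^ ((q x)⁻¹).toReal ≤ 2 :=
      rpow_le_of_le hl2.le one_le_two ENNReal.toReal_nonneg (toReal_inv_le_one (hq1 x))
    have hlne : l ^ ((q x)⁻¹).toReal ≠ 0 :=
      (ENNReal.rpow_pos hl0 (hl2.trans_le le_top).ne).ne'
    have hlnt : l ^ ((q x)⁻¹).toReal ≠ ∞ :=
      ENNReal.rpow_ne_top_of_nonneg ENNReal.toReal_nonneg (hl2.trans_le le_top).ne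
    rw [div_div (F j x) hm0.ne' hmt hlne hlnt]
    refine ENNReal.div_le_div_left ?_ _
    calc m * l ^ ((q x)⁻¹).toReal ≤ δ * 2 := mul_le_mul' hmδ.le hle
    _ = 2 * δ := mul_comm _ _
  -- Step 2
  have step2 : ∀ k : ℕ, volume {x : En n | ((k : ℝ≥0∞) + 1)⁻¹ ≤ F j x} = 0 := by
    intro k
    set c : ℝ≥0∞ := ((k : ℝ≥0∞) + 1)⁻¹ with hc
    have hc0 : c ≠ 0 := ENNReal.inv_ne_zero.mpr
      (ENNReal.add_ne_top.mpr ⟨ENNReal.natCast_ne_top k, one_ne_top⟩)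
    have hct : c ≠ ∞ := by simp [hc]
    set E : Set (En n) := {x : En n | c ≤ F j x} with hE
    have hEm : MeasurableSet E := hF j measurableSet_Ici
    have key : ∀ M : ℝ≥0∞, 1 < M → M ≠ ∞ → M * volume E ≤ 1 := by
      intro M hM1 hMt
      have hM0 : M ≠ 0 := (lt_trans one_pos hM1).ne'
      set δ : ℝ≥0∞ := c * M⁻¹ * 2⁻¹ with hδ
      have hδ0 : 0 < δ := by
        refine ENNReal.mul_pos (ENNReal.mul_pos hc0 ?_).ne' (by norm_num)
        exact (ENNReal.inv_pos.mpr hMt).ne'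
      have hδt : δ ≠ ∞ := by
        refine ENNReal.mul_ne_top (ENNReal.mul_ne_top hct ?_) (by norm_num)
        exact ENNReal.inv_ne_top.mpr hM0
      have h2δ : 2 * δ = c * M⁻¹ := by
        have e : 2 * δ = c * M⁻¹ * (2⁻¹ * 2) := by rw [hδ]; ring
        rw [e, ENNReal.inv_mul_cancel (by norm_num) (by norm_num), mul_one]
      have hk1 : ((k : ℝ≥0∞) + 1) ≠ 0 := by simp
      have hk2 : ((k : ℝ≥0∞) + 1) ≠ ⊤ :=
        ENNReal.add_ne_top.mpr ⟨ENNReal.natCast_ne_top k, one_ne_top⟩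
      have hcd : c / (2 * δ) = M := by
        rw [h2δ, div_eq_mul_inv, ENNReal.mul_inv (Or.inl hc0) (Or.inl hct), inv_inv M,
          ← mul_assoc, hc, inv_inv, ENNReal.inv_mul_cancel hk1 hk2, one_mul]
      have hbound : M * volume E ≤ rhoP p (fun x => F j x / (2 * δ)) := by
        rw [← lintegral_indicator_const hEm M]
        refine lintegral_mono fun x => ?_
        by_cases hx : x ∈ E
        · rw [Set.indicator_of_mem hx]
          have hv : M ≤ F j x / (2 * δ) := by
            rw [← hcd]; exact ENNReal.div_le_div_right hx _
          exact hv.trans (le_omegaP (hp1 x) (lt_of_lt_of_le hM1 hv))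
        · rw [Set.indicator_of_notMem hx]; exact zero_le
      exact hbound.trans (step1 δ hδ0 hδt)
    by_contra hne
    rcases eq_or_ne (volume E) ∞ with hEt | hEt
    · have := key 2 one_lt_two (by norm_num)
      rw [hEt, ENNReal.mul_top (by norm_num)] at this
      exact (by norm_num : ¬ (⊤:ℝ≥0∞) ≤ 1) this
    · set M : ℝ≥0∞ := max 2 ((volume E)⁻¹ * 2) with hM
      have hM1 : 1 < M := lt_of_lt_of_le one_lt_two (le_max_left _ _)
      have hMt : M ≠ ∞ := by
        have hfin : (volume E)⁻¹ * 2 ≠ ⊤ :=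
          ENNReal.mul_ne_top (ENNReal.inv_ne_top.mpr hne) (by norm_num)
        exact (max_lt (lt_top_iff_ne_top.mpr (by norm_num))
          (lt_top_iff_ne_top.mpr hfin)).ne
      have := key M hM1 hMt
      have hge : (2:ℝ≥0∞) ≤ M * volume E := by
        calc (2:ℝ≥0∞) = (volume E)⁻¹ * 2 * volume E := by
              rw [mul_comm _ 2, mul_assoc, ENNReal.inv_mul_cancel hne hEt, mul_one]
        _ ≤ M * volume E := mul_le_mul_left (le_max_right _ _) _
      have : (2:ℝ≥0∞) ≤ 1 := hge.trans this
      norm_num at this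
  -- Step 3
  have hsub : {x : En n | F j x ≠ 0} ⊆ ⋃ k : ℕ, {x : En n | ((k : ℝ≥0∞) + 1)⁻¹ ≤ F j x} := by
    intro x hx
    obtain ⟨k, hk⟩ := ENNReal.exists_inv_nat_lt hx
    refine Set.mem_iUnion.mpr ⟨k, ?_⟩
    calc ((k : ℝ≥0∞) + 1)⁻¹ ≤ ((k : ℝ≥0∞))⁻¹ := ENNReal.inv_le_inv.mpr le_self_add
    _ ≤ F j x := hk.le
  rw [MeasureTheory.ae_iff]
  exact measure_mono_null hsub (measure_iUnion_null fun k => step2 k)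

end Stmt9Aux
namespace Stmt9Aux
open MeasureTheory ENNReal NNReal

/-- Central pointwise denominator computation. -/
lemma central (Fx Gx : ℝ≥0∞) {a b m m' : ℝ≥0∞} {e e₁ e₂ : ℝ}
    (ha0 : a ≠ 0) (hat : a ≠ ∞) (hb0 : b ≠ 0) (hbt : b ≠ ∞)
    (hm0 : m ≠ 0) (hmt : m ≠ ∞) (hm'0 : m' ≠ 0) (hm't : m' ≠ ∞)
    (he : e = e₁ + e₂) (he0 : 0 ≤ e) (he1 : e ≤ 1) (he10 : 0 ≤ e₁) (he20 : 0 ≤ e₂) :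
    Fx * Gx / (8 * (m * m')) / (max a b * 4⁻¹) ^ e ≤
      (Fx / m / a ^ e₁) * (Gx / m' / b ^ e₂) / 2 := by
  set ν := max a b with hν
  have hν0 : ν ≠ 0 := fun h => ha0 (le_zero_iff.mp (h ▸ le_max_left a b))
  have hνt : ν ≠ ∞ := by
    rw [hν, ← lt_top_iff_ne_top]
    exact max_lt (lt_top_iff_ne_top.mpr hat) (lt_top_iff_ne_top.mpr hbt)
  have ha1 : a ^ e₁ ≠ 0 := (ENNReal.rpow_pos (pos_iff_ne_zero.mpr ha0) hat).ne'
  have ha2 : a ^ e₁ ≠ ∞ := ENNReal.rpow_ne_top_of_nonneg he10 hat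
  have hb1 : b ^ e₂ ≠ 0 := (ENNReal.rpow_pos (pos_iff_ne_zero.mpr hb0) hbt).ne'
  have hb2 : b ^ e₂ ≠ ∞ := ENNReal.rpow_ne_top_of_nonneg he20 hbt
  have hma0 : m * a ^ e₁ ≠ 0 := mul_ne_zero hm0 ha1
  have hmat : m * a ^ e₁ ≠ ∞ := ENNReal.mul_ne_top hmt ha2
  have hmb0 : m' * b ^ e₂ ≠ 0 := mul_ne_zero hm'0 hb1
  have hmbt : m' * b ^ e₂ ≠ ∞ := ENNReal.mul_ne_top hm't hb2
  have hν40 : ν * 4⁻¹ ≠ 0 := mul_ne_zero hν0 (by norm_num)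
  have hν4t : ν * 4⁻¹ ≠ ∞ := ENNReal.mul_ne_top hνt (by norm_num)
  have hνe0 : (ν * 4⁻¹) ^ e ≠ 0 := (ENNReal.rpow_pos (pos_iff_ne_zero.mpr hν40) hν4t).ne'
  have hνet : (ν * 4⁻¹) ^ e ≠ ∞ := ENNReal.rpow_ne_top_of_nonneg he0 hν4t
  have h8 : (8 : ℝ≥0∞) * (m * m') ≠ 0 := mul_ne_zero (by norm_num) (mul_ne_zero hm0 hm'0)
  have h8t : (8 : ℝ≥0∞) * (m * m') ≠ ∞ :=
    ENNReal.mul_ne_top (by norm_num) (ENNReal.mul_ne_top hmt hm't)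
  rw [div_div (Fx) hm0 hmt ha1 ha2, div_div (Gx) hm'0 hm't hb1 hb2,
    div_mul_div Fx Gx hma0 hmat hmb0 hmbt,
    div_div (Fx * Gx) (mul_ne_zero hma0 hmb0) (ENNReal.mul_ne_top hmat hmbt)
      (two_ne_zero) (by norm_num),
    div_div (Fx * Gx) h8 h8t hνe0 hνet]
  refine ENNReal.div_le_div_left ?_ _
  -- remains: m * a^e₁ * (m' * b^e₂) * 2 ≤ 8 * (m * m') * (ν * 4⁻¹)^e
  have step1 : (ν * 4⁻¹ : ℝ≥0∞) ^ e = ν ^ e * (4⁻¹) ^ e :=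
    ENNReal.mul_rpow_of_nonneg _ _ he0
  have step2 : (4⁻¹ : ℝ≥0∞) ^ e = ((4:ℝ≥0∞) ^ e)⁻¹ := ENNReal.inv_rpow 4 e
  have step3 : ((4:ℝ≥0∞) ^ e)⁻¹ ≥ 4⁻¹ :=
    ENNReal.inv_le_inv.mpr (rpow_le_of_le le_rfl (by norm_num) he0 he1)
  have step4 : ν ^ e = ν ^ e₁ * ν ^ e₂ := by
    rw [he]; exact ENNReal.rpow_add e₁ e₂ hν0 hνt
  have step5 : a ^ e₁ * b ^ e₂ ≤ ν ^ e := by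
    rw [step4]
    exact mul_le_mul' (ENNReal.rpow_le_rpow (le_max_left a b) he10)
      (ENNReal.rpow_le_rpow (le_max_right a b) he20)
  calc m * a ^ e₁ * (m' * b ^ e₂) * 2
      = 2 * (m * m') * (a ^ e₁ * b ^ e₂) := by ring
    _ ≤ 2 * (m * m') * ν ^ e := mul_le_mul' le_rfl step5
    _ = 8 * (m * m') * (ν ^ e * 4⁻¹) := by
        have h42 : (8:ℝ≥0∞) * 4⁻¹ = 2 := by
          rw [show (8:ℝ≥0∞) = 2 * 4 by norm_num, mul_assoc,
            ENNReal.mul_inv_cancel (by norm_num) (by norm_num), mul_one]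
        have hx : (8:ℝ≥0∞) * (m * m') * (ν ^ e * 4⁻¹) = 2 * (m * m') * ν ^ e := by
          rw [← h42]; ring
        exact hx.symm
    _ ≤ 8 * (m * m') * (ν ^ e * ((4:ℝ≥0∞) ^ e)⁻¹) :=
        mul_le_mul' le_rfl (mul_le_mul' le_rfl step3)
    _ = 8 * (m * m') * (ν * 4⁻¹) ^ e := by rw [step1, step2]

end Stmt9Aux
namespace Stmt9Aux
open MeasureTheory ENNReal NNReal

lemma tsum_eps : ∑' j : ℕ, ((2:ℝ≥0∞)⁻¹) ^ (j + 1) = 1 := by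
  have h1 : ∀ j : ℕ, ((2:ℝ≥0∞)⁻¹) ^ (j + 1) = ((2:ℝ≥0∞)⁻¹) ^ j * 2⁻¹ := fun j => pow_succ _ _
  rw [tsum_congr h1, ENNReal.tsum_mul_right, ENNReal.tsum_geometric]
  rw [show (1:ℝ≥0∞) - 2⁻¹ = 2⁻¹ by norm_num, inv_inv]
  exact ENNReal.mul_inv_cancel (by norm_num) (by norm_num)

lemma eps_ne_zero (j : ℕ) : ((2:ℝ≥0∞)⁻¹) ^ (j + 1) ≠ 0 :=
  pow_ne_zero _ (ENNReal.inv_ne_zero.mpr (by norm_num))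

lemma eps_le_one (j : ℕ) : ((2:ℝ≥0∞)⁻¹) ^ (j + 1) ≤ 1 :=
  pow_le_one₀ (zero_le) (ENNReal.inv_le_one.mpr one_le_two)

/-- The key step: bound for admissible finite `m`, `m'`. -/
lemma key {n : ℕ} {p p₁ p₂ q q₁ q₂ : En n → ℝ≥0∞}
    (hp : IsExponent p) (hp₁ : IsExponent p₁) (hp₂ : IsExponent p₂)
    (hq : IsExponent q) (hq₁ : IsExponent q₁) (hq₂ : IsExponent q₂)
    (hps : ∀ x, (p x)⁻¹ = (p₁ x)⁻¹ + (p₂ x)⁻¹)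
    (hqs : ∀ x, (q x)⁻¹ = (q₁ x)⁻¹ + (q₂ x)⁻¹)
    {F G : ℕ → En n → ℝ≥0∞} (hF : ∀ j, Measurable (F j)) (hG : ∀ j, Measurable (G j))
    {m m' : ℝ≥0∞} (hm0 : m ≠ 0) (hmt : m ≠ ∞) (hm'0 : m' ≠ 0) (hm't : m' ≠ ∞)
    (h1 : mixedModular q₁ p₁ (fun j x => F j x / m) ≤ 1)
    (h2 : mixedModular q₂ p₂ (fun j x => G j x / m') ≤ 1) :
    mixedNorm q p (fun j x => F j x * G j x) ≤ 8 * (m * m') := by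
  unfold mixedNorm
  refine sInf_le ⟨ENNReal.mul_pos (by norm_num) (mul_ne_zero hm0 hm'0), ?_⟩
  unfold mixedModular at h1 h2 ⊢
  -- choose near-optimal aⱼ, bⱼ
  have hax : ∀ j : ℕ, ∃ a : ℝ≥0∞, ((0 < a ∧
      rhoP p₁ (fun x => F j x / m / a ^ ((q₁ x)⁻¹).toReal) ≤ 1) ∧
      a < sInf {l : ℝ≥0∞ | 0 < l ∧
        rhoP p₁ (fun x => F j x / m / l ^ ((q₁ x)⁻¹).toReal) ≤ 1} + (2:ℝ≥0∞)⁻¹ ^ (j + 1)) := by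
    intro j
    have hA : sInf {l : ℝ≥0∞ | 0 < l ∧
        rhoP p₁ (fun x => F j x / m / l ^ ((q₁ x)⁻¹).toReal) ≤ 1} ≤ 1 :=
      le_trans (ENNReal.le_tsum j) h1
    have := sInf_lt_iff.mp (ENNReal.lt_add_right (hA.trans_lt one_lt_top).ne (eps_ne_zero j))
    obtain ⟨a, haS, halt⟩ := this
    exact ⟨a, haS, halt⟩
  have hbx : ∀ j : ℕ, ∃ b : ℝ≥0∞, ((0 < b ∧
      rhoP p₂ (fun x => G j x / m' / b ^ ((q₂ x)⁻¹).toReal) ≤ 1) ∧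
      b < sInf {l : ℝ≥0∞ | 0 < l ∧
        rhoP p₂ (fun x => G j x / m' / l ^ ((q₂ x)⁻¹).toReal) ≤ 1} + (2:ℝ≥0∞)⁻¹ ^ (j + 1)) := by
    intro j
    have hB : sInf {l : ℝ≥0∞ | 0 < l ∧
        rhoP p₂ (fun x => G j x / m' / l ^ ((q₂ x)⁻¹).toReal) ≤ 1} ≤ 1 :=
      le_trans (ENNReal.le_tsum j) h2
    have := sInf_lt_iff.mp (ENNReal.lt_add_right (hB.trans_lt one_lt_top).ne (eps_ne_zero j))
    obtain ⟨b, hbS, hblt⟩ := this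
    exact ⟨b, hbS, hblt⟩
  choose a haS halt using hax
  choose b hbS hblt using hbx
  have hat : ∀ j, a j ≠ ∞ := by
    intro j
    have hA : sInf {l : ℝ≥0∞ | 0 < l ∧
        rhoP p₁ (fun x => F j x / m / l ^ ((q₁ x)⁻¹).toReal) ≤ 1} ≤ 1 :=
      le_trans (ENNReal.le_tsum j) h1
    have : a j < 1 + 1 := (halt j).trans_le (add_le_add hA (eps_le_one j))
    exact (this.trans_le le_top).ne
  have hbt : ∀ j, b j ≠ ∞ := by
    intro j
    have hB : sInf {l : ℝ≥0∞ | 0 < l ∧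
        rhoP p₂ (fun x => G j x / m' / l ^ ((q₂ x)⁻¹).toReal) ≤ 1} ≤ 1 :=
      le_trans (ENNReal.le_tsum j) h2
    have : b j < 1 + 1 := (hblt j).trans_le (add_le_add hB (eps_le_one j))
    exact (this.trans_le le_top).ne
  -- membership of νⱼ in the target inner set
  have hmem : ∀ j : ℕ, max (a j) (b j) * 4⁻¹ ∈ {l : ℝ≥0∞ | 0 < l ∧
      rhoP p (fun x => F j x * G j x / (8 * (m * m')) / l ^ ((q x)⁻¹).toReal) ≤ 1} := by
    intro j
    have hν0 : max (a j) (b j) * (4:ℝ≥0∞)⁻¹ ≠ 0 :=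
      mul_ne_zero (fun h => (haS j).1.ne' (le_zero_iff.mp (h ▸ le_max_left _ _)))
        (by norm_num)
    refine ⟨pos_iff_ne_zero.mpr hν0, ?_⟩
    -- pointwise bound then integrate
    have hpt : ∀ x, omegaP (p x)
        (F j x * G j x / (8 * (m * m')) / (max (a j) (b j) * 4⁻¹) ^ ((q x)⁻¹).toReal) ≤
        2⁻¹ * (omegaP (p₁ x) (F j x / m / (a j) ^ ((q₁ x)⁻¹).toReal) +
          omegaP (p₂ x) (G j x / m' / (b j) ^ ((q₂ x)⁻¹).toReal)) := by
      intro x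
      have hq₁0 : (q₁ x) ≠ 0 := (lt_of_lt_of_le one_pos (hq₁.2 x)).ne'
      have hq₂0 : (q₂ x) ≠ 0 := (lt_of_lt_of_le one_pos (hq₂.2 x)).ne'
      have he : ((q x)⁻¹).toReal = ((q₁ x)⁻¹).toReal + ((q₂ x)⁻¹).toReal := by
        rw [hqs x, ENNReal.toReal_add (ENNReal.inv_ne_top.mpr hq₁0)
          (ENNReal.inv_ne_top.mpr hq₂0)]
      have hcent := central (F j x) (G j x) (haS j).1.ne' (hat j) (hbS j).1.ne' (hbt j)
        hm0 hmt hm'0 hm't he ENNReal.toReal_nonneg (toReal_inv_le_one (hq.2 x))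
        ENNReal.toReal_nonneg ENNReal.toReal_nonneg
      set u := F j x / m / (a j) ^ ((q₁ x)⁻¹).toReal with hu
      set v := G j x / m' / (b j) ^ ((q₂ x)⁻¹).toReal with hv
      calc omegaP (p x) (F j x * G j x / (8 * (m * m')) /
              (max (a j) (b j) * 4⁻¹) ^ ((q x)⁻¹).toReal)
          ≤ omegaP (p x) (u * v / 2) := omegaP_mono hcent
        _ ≤ omegaP (p x) (u * v) / 2 := omegaP_half (hp.2 x) _
        _ ≤ (omegaP (p₁ x) u + omegaP (p₂ x) v) / 2 :=
            ENNReal.div_le_div_right (omegaP_young (hp₁.2 x) (hp₂.2 x) (hps x) u v) 2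
        _ = 2⁻¹ * (omegaP (p₁ x) u + omegaP (p₂ x) v) := by
            rw [div_eq_mul_inv, mul_comm]
    have hmeas : Measurable fun x =>
        omegaP (p₁ x) (F j x / m / (a j) ^ ((q₁ x)⁻¹).toReal) := by
      refine measurable_omegaP hp₁.1 ?_
      exact ((hF j).div measurable_const).div
        (measurable_const.pow (hq₁.1.inv.ennreal_toReal))
    calc rhoP p (fun x => F j x * G j x / (8 * (m * m')) /
            (max (a j) (b j) * 4⁻¹) ^ ((q x)⁻¹).toReal)
        ≤ ∫⁻ x, 2⁻¹ * (omegaP (p₁ x) (F j x / m / (a j) ^ ((q₁ x)⁻¹).toReal) +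
            omegaP (p₂ x) (G j x / m' / (b j) ^ ((q₂ x)⁻¹).toReal)) :=
          lintegral_mono hpt
      _ = 2⁻¹ * ∫⁻ x, (omegaP (p₁ x) (F j x / m / (a j) ^ ((q₁ x)⁻¹).toReal) +
            omegaP (p₂ x) (G j x / m' / (b j) ^ ((q₂ x)⁻¹).toReal)) :=
          lintegral_const_mul' _ _ (by norm_num)
      _ = 2⁻¹ * ((rhoP p₁ fun x => F j x / m / (a j) ^ ((q₁ x)⁻¹).toReal) +
            rhoP p₂ fun x => G j x / m' / (b j) ^ ((q₂ x)⁻¹).toReal) := by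
          rw [lintegral_add_left hmeas]; rfl
      _ ≤ 2⁻¹ * (1 + 1) := mul_le_mul' le_rfl (add_le_add (haS j).2 (hbS j).2)
      _ = 1 := by
          rw [show (1:ℝ≥0∞) + 1 = 2 by norm_num]
          exact ENNReal.inv_mul_cancel (by norm_num) (by norm_num)
  -- sum up
  calc ∑' j, sInf {l : ℝ≥0∞ | 0 < l ∧
        rhoP p (fun x => F j x * G j x / (8 * (m * m')) / l ^ ((q x)⁻¹).toReal) ≤ 1}
      ≤ ∑' j, (a j + b j) * 4⁻¹ := by
        refine ENNReal.tsum_le_tsum fun j => ?_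
        refine le_trans (sInf_le (hmem j)) ?_
        exact mul_le_mul_left (max_le le_self_add le_add_self) _
    _ = (∑' j, a j + ∑' j, b j) * 4⁻¹ := by rw [ENNReal.tsum_mul_right, ENNReal.tsum_add]
    _ ≤ ((1 + 1) + (1 + 1)) * 4⁻¹ := by
        refine mul_le_mul_left (add_le_add ?_ ?_) _
        · calc ∑' j, a j ≤ ∑' j : ℕ, (sInf {l : ℝ≥0∞ | 0 < l ∧
              rhoP p₁ (fun x => F j x / m / l ^ ((q₁ x)⁻¹).toReal) ≤ 1} +
              (2:ℝ≥0∞)⁻¹ ^ (j + 1)) := ENNReal.tsum_le_tsum fun j => (halt j).le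
          _ = _ + _ := ENNReal.tsum_add
          _ ≤ 1 + 1 := add_le_add h1 tsum_eps.le
        · calc ∑' j, b j ≤ ∑' j : ℕ, (sInf {l : ℝ≥0∞ | 0 < l ∧
              rhoP p₂ (fun x => G j x / m' / l ^ ((q₂ x)⁻¹).toReal) ≤ 1} +
              (2:ℝ≥0∞)⁻¹ ^ (j + 1)) := ENNReal.tsum_le_tsum fun j => (hblt j).le
          _ = _ + _ := ENNReal.tsum_add
          _ ≤ 1 + 1 := add_le_add h2 tsum_eps.le
    _ = 1 := by
        rw [show ((1:ℝ≥0∞) + 1) + (1 + 1) = 4 by norm_num]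
        exact ENNReal.mul_inv_cancel (by norm_num) (by norm_num)

end Stmt9Aux

/-- generalized Hölder inequality in mixed Lebesgue-sequence spaces. -/
theorem stmt9 {n : ℕ} (p p₁ p₂ q q₁ q₂ : En n → ℝ≥0∞)
    (hp : IsExponent p) (hp₁ : IsExponent p₁) (hp₂ : IsExponent p₂)
    (hq : IsExponent q) (hq₁ : IsExponent q₁) (hq₂ : IsExponent q₂)
    (hps : ∀ x, (p x)⁻¹ = (p₁ x)⁻¹ + (p₂ x)⁻¹)
    (hqs : ∀ x, (q x)⁻¹ = (q₁ x)⁻¹ + (q₂ x)⁻¹) :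
    ∃ c : ℝ≥0∞, c ≠ ∞ ∧ ∀ f g : ℕ → En n → ℝ,
      (∀ j, Measurable (f j)) → (∀ j, Measurable (g j)) →
      mixedNorm q p (fun j x => ENNReal.ofReal |f j x * g j x|) ≤
        c * mixedNorm q₁ p₁ (fun j => nnAbs (f j)) * mixedNorm q₂ p₂ (fun j => nnAbs (g j)) := by
  classical
  refine ⟨8, by norm_num, ?_⟩
  intro f g hf hg
  open Stmt9Aux MeasureTheory ENNReal in
  set F : ℕ → En n → ℝ≥0∞ := fun j => nnAbs (f j) with hFdef
  set G : ℕ → En n → ℝ≥0∞ := fun j => nnAbs (g j) with hGdef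
  have hFG : (fun j x => ENNReal.ofReal |f j x * g j x|) = fun j x => F j x * G j x := by
    funext j x
    rw [abs_mul, ENNReal.ofReal_mul (abs_nonneg _)]
    rfl
  rw [hFG]
  have hFm : ∀ j, Measurable (F j) := fun j => ((hf j).abs).ennreal_ofReal
  have hGm : ∀ j, Measurable (G j) := fun j => ((hg j).abs).ennreal_ofReal
  set M₁ := mixedNorm q₁ p₁ F with hM₁def
  set M₂ := mixedNorm q₂ p₂ G with hM₂def
  by_cases hM₁ : M₁ = 0
  · have hz : ∀ j, ∀ᵐ x, F j x * G j x = 0 := by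
      intro j
      filter_upwards [Stmt9Aux.ae_zero_of_mixedNorm_zero hq₁.2 hp₁.2 hFm hM₁ j] with x hx
      rw [hx, zero_mul]
    rw [Stmt9Aux.mixedNorm_zero_of_ae q p hp.2 hz]
    exact zero_le
  by_cases hM₂ : M₂ = 0
  · have hz : ∀ j, ∀ᵐ x, F j x * G j x = 0 := by
      intro j
      filter_upwards [Stmt9Aux.ae_zero_of_mixedNorm_zero hq₂.2 hp₂.2 hGm hM₂ j] with x hx
      rw [hx, mul_zero]
    rw [Stmt9Aux.mixedNorm_zero_of_ae q p hp.2 hz]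
    exact zero_le
  by_cases hM₁t : M₁ = ∞
  · have : (8:ℝ≥0∞) * M₁ * M₂ = ∞ := by
      rw [hM₁t, ENNReal.mul_top (by norm_num), ENNReal.top_mul hM₂]
    rw [this]
    exact le_top
  by_cases hM₂t : M₂ = ∞
  · have : (8:ℝ≥0∞) * M₁ * M₂ = ∞ := by
      rw [hM₂t, ENNReal.mul_top (mul_ne_zero (by norm_num) hM₁)]
    rw [this]
    exact le_top
  -- main case: both finite and nonzero
  refine ENNReal.le_of_forall_pos_le_add fun ε hε _ => ?_
  set X : ℝ≥0∞ := M₁ + M₂ + 1 with hX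
  have hX0 : (8:ℝ≥0∞) * X ≠ 0 := mul_ne_zero (by norm_num) (by simp [hX])
  have hXt : (8:ℝ≥0∞) * X ≠ ∞ := by
    refine ENNReal.mul_ne_top (by norm_num) ?_
    simp [hX, ENNReal.add_eq_top, hM₁t, hM₂t]
  set δ : ℝ≥0∞ := min 1 ((ε : ℝ≥0∞) / (8 * X)) with hδ
  have hδ0 : δ ≠ 0 := by
    rw [hδ]
    refine (lt_min one_pos ?_).ne'
    exact ENNReal.div_pos (ENNReal.coe_ne_zero.mpr hε.ne') hXt
  have hδ1 : δ ≤ 1 := min_le_left _ _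
  have hδt : δ ≠ ∞ := (hδ1.trans_lt one_lt_top).ne
  have hδε : δ ≤ (ε : ℝ≥0∞) / (8 * X) := min_le_right _ _
  -- pick m, m'
  have hm1 : sInf {μ : ℝ≥0∞ | 0 < μ ∧ mixedModular q₁ p₁ (fun j x => F j x / μ) ≤ 1} <
      M₁ + δ := by
    rw [hM₁def, mixedNorm] at *
    exact ENNReal.lt_add_right hM₁t hδ0
  obtain ⟨m, ⟨hm0, hmmod⟩, hmlt⟩ := sInf_lt_iff.mp hm1
  have hm2 : sInf {μ : ℝ≥0∞ | 0 < μ ∧ mixedModular q₂ p₂ (fun j x => G j x / μ) ≤ 1} <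
      M₂ + δ := by
    rw [hM₂def, mixedNorm] at *
    exact ENNReal.lt_add_right hM₂t hδ0
  obtain ⟨m', ⟨hm'0, hm'mod⟩, hm'lt⟩ := sInf_lt_iff.mp hm2
  have hmt : m ≠ ∞ :=
    (hmlt.trans (lt_top_iff_ne_top.mpr (ENNReal.add_ne_top.mpr ⟨hM₁t, hδt⟩))).ne
  have hm't : m' ≠ ∞ :=
    (hm'lt.trans (lt_top_iff_ne_top.mpr (ENNReal.add_ne_top.mpr ⟨hM₂t, hδt⟩))).ne
  have hkey := Stmt9Aux.key hp hp₁ hp₂ hq hq₁ hq₂ hps hqs hFm hGm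
    hm0.ne' hmt hm'0.ne' hm't hmmod hm'mod
  refine hkey.trans ?_
  have hexp : (8:ℝ≥0∞) * (m * m') ≤ 8 * ((M₁ + δ) * (M₂ + δ)) :=
    mul_le_mul' le_rfl (mul_le_mul' hmlt.le hm'lt.le)
  refine hexp.trans ?_
  have hring : (8:ℝ≥0∞) * ((M₁ + δ) * (M₂ + δ)) =
      8 * M₁ * M₂ + 8 * (M₁ * δ + δ * M₂ + δ * δ) := by ring
  rw [hring]
  refine add_le_add le_rfl ?_
  have hsmall : M₁ * δ + δ * M₂ + δ * δ ≤ δ * X := by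
    have : M₁ * δ + δ * M₂ + δ * δ ≤ M₁ * δ + δ * M₂ + δ * 1 :=
      add_le_add le_rfl (mul_le_mul' le_rfl hδ1)
    refine this.trans (le_of_eq ?_)
    rw [hX]; ring
  calc (8:ℝ≥0∞) * (M₁ * δ + δ * M₂ + δ * δ) ≤ 8 * (δ * X) := mul_le_mul' le_rfl hsmall
    _ = δ * (8 * X) := by ring
    _ ≤ ((ε : ℝ≥0∞) / (8 * X)) * (8 * X) := mul_le_mul_left hδε _
    _ = (ε : ℝ≥0∞) := ENNReal.div_mul_cancel hX0 hXt
end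

section
/- Let p, p₁, p₂, q : ℝⁿ → [1,∞] be measurable with 1/p = 1/p₁ + 1/p₂ pointwise. Then ‖(f_j g_j)_j‖_{ℓ^{q(·)}(L^{p(·)})} ≲ (sup_{k∈ℕ₀} ‖f_k‖_{p₁(·)}) · ‖(g_j)_j‖_{ℓ^{q(·)}(L^{p₂(·)})} for all sequences of measurable functions. -/
open MeasureTheory ENNReal Filter
open scoped SchwartzMap FourierTransform

/- ## Auxiliary lemmas for stmt10 -/

section Aux10

open MeasureTheory ENNReal

variable {n : ℕ}

private lemma omegaP_mono {P t t' : ℝ≥0∞} (h : t ≤ t') : omegaP P t ≤ omegaP P t' := by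
  unfold omegaP
  split_ifs with h1 h2 h3 h4
  · exact le_refl 0
  · exact zero_le
  · exact absurd (h.trans h4) h2
  · exact le_refl _
  · exact ENNReal.rpow_le_rpow h ENNReal.toReal_nonneg

private lemma one_le_toReal_of {P : ℝ≥0∞} (h1 : 1 ≤ P) (h2 : P ≠ ∞) : 1 ≤ P.toReal := by
  rw [show (1:ℝ) = (1:ℝ≥0∞).toReal by simp]
  exact ENNReal.toReal_mono h2 h1

private lemma omegaP_zero {P : ℝ≥0∞} (h1 : 1 ≤ P) : omegaP P 0 = 0 := by
  unfold omegaP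
  split_ifs with h2 h3
  · rfl
  · exact absurd (zero_le) h3
  · refine ENNReal.zero_rpow_of_pos (ENNReal.toReal_pos ?_ h2)
    exact fun h => by simp [h] at h1

private lemma omegaP_half {P : ℝ≥0∞} (h1 : 1 ≤ P) (t : ℝ≥0∞) :
    omegaP P (t / 2) ≤ omegaP P t / 2 := by
  have htt : t / 2 ≤ t := by
    rw [ENNReal.div_le_iff_le_mul (Or.inl two_ne_zero) (Or.inl ENNReal.ofNat_ne_top)]
    exact le_mul_of_one_le_right (zero_le) one_le_two
  unfold omegaP
  split_ifs with h2 h3 h4 h5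
  · simp
  · simp
  · exact absurd (htt.trans h5) h3
  · rw [ENNReal.top_div_of_ne_top ENNReal.ofNat_ne_top]
  · have hr : 1 ≤ P.toReal := one_le_toReal_of h1 h2
    rw [ENNReal.div_rpow_of_nonneg _ _ ENNReal.toReal_nonneg]
    refine ENNReal.div_le_div_left ?_ _
    calc (2:ℝ≥0∞) = 2 ^ (1:ℝ) := by rw [ENNReal.rpow_one]
    _ ≤ 2 ^ P.toReal := ENNReal.rpow_le_rpow_of_exponent_le one_le_two hr

private lemma self_le_omegaP {P t : ℝ≥0∞} (h1 : 1 ≤ P) (ht : 2 ≤ t) : t ≤ omegaP P t := by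
  unfold omegaP
  split_ifs with h2 h3
  · exact absurd (lt_of_lt_of_le one_lt_two ht) (not_lt.mpr h3)
  · exact le_top
  · have hr : 1 ≤ P.toReal := one_le_toReal_of h1 h2
    calc t = t ^ (1:ℝ) := (ENNReal.rpow_one t).symm
    _ ≤ t ^ P.toReal :=
      ENNReal.rpow_le_rpow_of_exponent_le (le_trans one_le_two ht) hr

private lemma omegaP_young {a b c t s : ℝ≥0∞} (ha : 1 ≤ a) (hb : 1 ≤ b) (hc : 1 ≤ c)
    (h : a⁻¹ = b⁻¹ + c⁻¹) : omegaP a (t * s) ≤ omegaP b t + omegaP c s := by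
  by_cases hbt : b = ∞
  · subst hbt
    have hac : a = c := by
      rw [ENNReal.inv_top, zero_add] at h
      rw [← inv_inv a, h, inv_inv]
    subst hac
    by_cases ht : t ≤ 1
    · have h0 : omegaP ∞ t = 0 := by unfold omegaP; simp [ht]
      rw [h0, zero_add]
      exact omegaP_mono (mul_le_of_le_one_left (zero_le) ht)
    · have h0 : omegaP ∞ t = ∞ := by unfold omegaP; simp [ht]
      rw [h0]
      simp
  by_cases hct : c = ∞
  · subst hct
    have hac : a = b := by
      rw [ENNReal.inv_top, add_zero] at h
      rw [← inv_inv a, h, inv_inv]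
    subst hac
    by_cases hs : s ≤ 1
    · have h0 : omegaP ∞ s = 0 := by unfold omegaP; simp [hs]
      rw [h0, add_zero]
      exact omegaP_mono (mul_le_of_le_one_right (zero_le) hs)
    · have h0 : omegaP ∞ s = ∞ := by unfold omegaP; simp [hs]
      rw [h0]
      simp
  -- all exponents finite
  have hb0 : b ≠ 0 := fun h0 => by simp [h0] at hb
  have hc0 : c ≠ 0 := fun h0 => by simp [h0] at hc
  have hat : a ≠ ∞ := by
    intro hA
    rw [hA, ENNReal.inv_top] at h
    have hbz : b⁻¹ = 0 :=
      le_antisymm (le_trans le_self_add (le_of_eq h.symm)) (zero_le)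
    exact hbt (ENNReal.inv_eq_zero.mp hbz)
  set aR := a.toReal with haR
  set bR := b.toReal with hbR
  set cR := c.toReal with hcR
  have haR1 : 1 ≤ aR := one_le_toReal_of ha hat
  have hbR1 : 1 ≤ bR := one_le_toReal_of hb hbt
  have hcR1 : 1 ≤ cR := one_le_toReal_of hc hct
  have haRpos : (0:ℝ) < aR := lt_of_lt_of_le one_pos haR1
  have hbRpos : (0:ℝ) < bR := lt_of_lt_of_le one_pos hbR1
  have hcRpos : (0:ℝ) < cR := lt_of_lt_of_le one_pos hcR1
  have hsum : aR⁻¹ = bR⁻¹ + cR⁻¹ := by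
    have h' := congrArg ENNReal.toReal h
    rwa [ENNReal.toReal_add (by simp [hb0]) (by simp [hc0]), ENNReal.toReal_inv,
      ENNReal.toReal_inv, ENNReal.toReal_inv] at h'
  have hab : aR < bR := by
    have h1 : bR⁻¹ < aR⁻¹ := by
      rw [hsum]
      exact lt_add_of_pos_right _ (inv_pos.mpr hcRpos)
    exact (inv_lt_inv₀ hbRpos haRpos).mp h1
  set PP := bR / aR with hPP
  set QQ := cR / aR with hQQ
  have hconj : PP.HolderConjugate QQ := by
    rw [Real.holderConjugate_iff]
    constructor
    · exact (one_lt_div haRpos).mpr hab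
    · have e1 : PP⁻¹ = aR * bR⁻¹ := by
        rw [hPP, inv_div]
        ring
      have e2 : QQ⁻¹ = aR * cR⁻¹ := by
        rw [hQQ, inv_div]
        ring
      rw [e1, e2, ← mul_add, ← hsum, mul_inv_cancel₀ (ne_of_gt haRpos)]
  have hOa : omegaP a (t * s) = (t * s) ^ aR := by unfold omegaP; rw [if_neg hat]
  have hOb : omegaP b t = t ^ bR := by unfold omegaP; rw [if_neg hbt]
  have hOc : omegaP c s = s ^ cR := by unfold omegaP; rw [if_neg hct]
  rw [hOa, hOb, hOc]
  have hPP1 : (1:ℝ≥0∞) ≤ ENNReal.ofReal PP := by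
    rw [ENNReal.one_le_ofReal]
    exact hconj.lt.le
  have hQQ1 : (1:ℝ≥0∞) ≤ ENNReal.ofReal QQ := by
    rw [ENNReal.one_le_ofReal]
    exact hconj.symm.lt.le
  calc (t * s) ^ aR = t ^ aR * s ^ aR :=
        ENNReal.mul_rpow_of_nonneg _ _ ENNReal.toReal_nonneg
  _ ≤ (t ^ aR) ^ PP / ENNReal.ofReal PP + (s ^ aR) ^ QQ / ENNReal.ofReal QQ :=
        ENNReal.young_inequality _ _ hconj
  _ ≤ (t ^ aR) ^ PP + (s ^ aR) ^ QQ := by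
        refine add_le_add ?_ ?_
        · calc (t ^ aR) ^ PP / ENNReal.ofReal PP ≤ (t ^ aR) ^ PP / 1 :=
                ENNReal.div_le_div_left hPP1 _
          _ = (t ^ aR) ^ PP := div_one _
        · calc (s ^ aR) ^ QQ / ENNReal.ofReal QQ ≤ (s ^ aR) ^ QQ / 1 :=
                ENNReal.div_le_div_left hQQ1 _
          _ = (s ^ aR) ^ QQ := div_one _
  _ = t ^ bR + s ^ cR := by
        rw [← ENNReal.rpow_mul, ← ENNReal.rpow_mul]
        congr 1
        · congr 1
          rw [hPP]
          field_simp
        · congr 1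
          rw [hQQ]
          field_simp

private lemma measurable_omegaP {P F : En n → ℝ≥0∞} (hP : Measurable P) (hF : Measurable F) :
    Measurable fun x => omegaP (P x) (F x) := by
  unfold omegaP
  refine Measurable.ite (hP (measurableSet_singleton ∞)) ?_ ?_
  · exact Measurable.ite (hF measurableSet_Iic) measurable_const measurable_const
  · exact hF.pow (ENNReal.measurable_toReal.comp hP)

private lemma rhoP_mono {P : En n → ℝ≥0∞} {F G : En n → ℝ≥0∞} (h : ∀ x, F x ≤ G x) :
    rhoP P F ≤ rhoP P G :=
  lintegral_mono fun x => omegaP_mono (h x)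

/-- If all the modulars `ρ((N+1)·F)` are bounded by one, then `F = 0` a.e. -/
private lemma ae_zero_of_rho {P : En n → ℝ≥0∞} (hPm : Measurable P) (hP1 : ∀ x, 1 ≤ P x)
    {F : En n → ℝ≥0∞} (hF : Measurable F)
    (h : ∀ N : ℕ, rhoP P (fun x => ((N:ℝ≥0∞) + 1) * F x) ≤ 1) :
    ∀ᵐ x, F x = 0 := by
  have hEk : ∀ k : ℕ, volume {x : En n | ((k:ℝ≥0∞) + 1)⁻¹ < F x} = 0 := by
    intro k
    set E : Set (En n) := {x : En n | ((k:ℝ≥0∞) + 1)⁻¹ < F x} with hE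
    have hEmeas : MeasurableSet E := hF measurableSet_Ioi
    by_contra hne
    obtain ⟨M, hM⟩ := ENNReal.exists_inv_nat_lt hne
    -- use N with N + 1 ≥ (M+2)*(k+1)
    set N : ℕ := (M + 2) * (k + 1) with hN
    have hbig : ∀ x ∈ E, ((M:ℝ≥0∞) + 2) ≤ ((N:ℝ≥0∞) + 1) * F x := by
      intro x hx
      have h1 : ((k:ℝ≥0∞) + 1)⁻¹ ≤ F x := (hx : _ < F x).le
      have h2 : ((M:ℝ≥0∞) + 2) * ((k:ℝ≥0∞) + 1) ≤ ((N:ℝ≥0∞) + 1) := by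
        have : ((N:ℝ≥0∞)) = ((M:ℝ≥0∞) + 2) * ((k:ℝ≥0∞) + 1) := by
          rw [hN]
          push_cast
          ring
        rw [← this]
        exact le_self_add
      calc ((M:ℝ≥0∞) + 2) = ((M:ℝ≥0∞) + 2) * (((k:ℝ≥0∞) + 1) * ((k:ℝ≥0∞) + 1)⁻¹) := by
            rw [ENNReal.mul_inv_cancel (by simp) (by simp), mul_one]
      _ = (((M:ℝ≥0∞) + 2) * ((k:ℝ≥0∞) + 1)) * ((k:ℝ≥0∞) + 1)⁻¹ := by ring
      _ ≤ ((N:ℝ≥0∞) + 1) * ((k:ℝ≥0∞) + 1)⁻¹ := mul_le_mul_left h2 _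
      _ ≤ ((N:ℝ≥0∞) + 1) * F x := mul_le_mul_right h1 _
    have hmeasInt : Measurable fun x => omegaP (P x) (((N:ℝ≥0∞) + 1) * F x) :=
      measurable_omegaP hPm (hF.const_mul _)
    have hlow : ((M:ℝ≥0∞) + 2) * volume E ≤ 1 := by
      calc ((M:ℝ≥0∞) + 2) * volume E = ∫⁻ _ in E, ((M:ℝ≥0∞) + 2) := by
            rw [setLIntegral_const, mul_comm]
      _ ≤ ∫⁻ x in E, omegaP (P x) (((N:ℝ≥0∞) + 1) * F x) := by
            refine setLIntegral_mono hmeasInt fun x hx => ?_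
            have := hbig x hx
            calc ((M:ℝ≥0∞) + 2) ≤ ((N:ℝ≥0∞) + 1) * F x := this
            _ ≤ omegaP (P x) (((N:ℝ≥0∞) + 1) * F x) :=
                self_le_omegaP (hP1 x) (le_trans (by norm_num) this)
      _ ≤ ∫⁻ x, omegaP (P x) (((N:ℝ≥0∞) + 1) * F x) := setLIntegral_le_lintegral _ _
      _ ≤ 1 := h N
    have hventry : volume E ≤ ((M:ℝ≥0∞) + 2)⁻¹ :=
      ENNReal.le_inv_iff_mul_le.mpr (by rwa [mul_comm] at hlow)
    have : volume E ≤ ((M:ℝ≥0∞))⁻¹ :=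
      le_trans hventry (ENNReal.inv_le_inv' le_self_add)
    exact absurd (lt_of_lt_of_le hM this) (lt_irrefl _)
  have hsub : {x : En n | F x ≠ 0} ⊆ ⋃ k : ℕ, {x : En n | ((k:ℝ≥0∞) + 1)⁻¹ < F x} := by
    intro x hx
    obtain ⟨m, hm⟩ := ENNReal.exists_inv_nat_lt (hx : F x ≠ 0)
    refine Set.mem_iUnion.mpr ⟨m, ?_⟩
    exact lt_of_le_of_lt (ENNReal.inv_le_inv' le_self_add) hm
  have : volume {x : En n | F x ≠ 0} = 0 :=
    measure_mono_null hsub (measure_iUnion_null hEk)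
  filter_upwards [measure_eq_zero_iff_ae_notMem.mp this] with x hx
  simpa using hx



private lemma rho_div_le_one_of_lt {P F : En n → ℝ≥0∞} {a : ℝ≥0∞}
    (h : luxNorm P F < a) : rhoP P (fun x => F x / a) ≤ 1 := by
  obtain ⟨l, hl, hla⟩ := sInf_lt_iff.mp h
  exact le_trans (rhoP_mono fun x => ENNReal.div_le_div_left hla.le _) hl.2

/-- If the Luxemburg norm of `F` vanishes, then `F = 0` a.e. -/
private lemma ae_zero_of_luxNorm_zero {P : En n → ℝ≥0∞} (hPm : Measurable P)
    (hP1 : ∀ x, 1 ≤ P x) {F : En n → ℝ≥0∞} (hF : Measurable F)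
    (h : luxNorm P F = 0) : ∀ᵐ x, F x = 0 := by
  refine ae_zero_of_rho hPm hP1 hF fun N => ?_
  have hlt : luxNorm P F < ((N:ℝ≥0∞) + 1)⁻¹ := by
    rw [h]
    exact ENNReal.inv_pos.mpr (by simp)
  obtain ⟨l, hl, hla⟩ := sInf_lt_iff.mp hlt
  refine le_trans (rhoP_mono fun x => ?_) hl.2
  have hNl : ((N:ℝ≥0∞) + 1) ≤ l⁻¹ := by
    calc ((N:ℝ≥0∞) + 1) = (((N:ℝ≥0∞) + 1)⁻¹)⁻¹ := by rw [inv_inv]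
    _ ≤ l⁻¹ := ENNReal.inv_le_inv' hla.le
  calc ((N:ℝ≥0∞) + 1) * F x ≤ l⁻¹ * F x := mul_le_mul_left hNl _
  _ = F x / l := by rw [div_eq_mul_inv, mul_comm]

/-- If all the component functions vanish a.e., the mixed norm is zero. -/
private lemma mixedNorm_zero_of_ae {q P : En n → ℝ≥0∞} (hP1 : ∀ x, 1 ≤ P x)
    {F : ℕ → En n → ℝ≥0∞} (h : ∀ j, ∀ᵐ x, F j x = 0) : mixedNorm q P F = 0 := by
  have hmod : ∀ m : ℝ≥0∞, 0 < m → mixedModular q P (fun j x => F j x / m) ≤ 1 := by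
    intro m _
    have hj : ∀ j : ℕ,
        sInf {l : ℝ≥0∞ | 0 < l ∧
          rhoP P (fun x => (F j x / m) / l ^ ((q x)⁻¹).toReal) ≤ 1} = 0 := by
      intro j
      refine le_antisymm ?_ (zero_le)
      refine ENNReal.le_of_forall_pos_le_add fun ε hε _ => ?_
      rw [zero_add]
      refine sInf_le ⟨by simpa using (ENNReal.coe_pos.2 hε), ?_⟩
      have hz : rhoP P (fun x => (F j x / m) / (ε:ℝ≥0∞) ^ ((q x)⁻¹).toReal) = 0 := by
        unfold rhoP
        rw [← lintegral_zero]
        refine lintegral_congr_ae ?_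
        filter_upwards [h j] with x hx
        rw [hx, ENNReal.zero_div, ENNReal.zero_div, omegaP_zero (hP1 x)]
      rw [hz]
      exact zero_le_one
    unfold mixedModular
    rw [tsum_congr hj]
    simp
  refine le_antisymm ?_ (zero_le)
  refine ENNReal.le_of_forall_pos_le_add fun ε hε _ => ?_
  rw [zero_add]
  exact sInf_le ⟨by simpa using (ENNReal.coe_pos.2 hε), hmod _ (by simpa using (ENNReal.coe_pos.2 hε))⟩

/-- If the mixed norm vanishes, all component functions vanish a.e. -/
private lemma ae_zero_of_mixedNorm_zero {q P : En n → ℝ≥0∞} (hPm : Measurable P)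
    (hP1 : ∀ x, 1 ≤ P x) (hq1 : ∀ x, 1 ≤ q x) {G : ℕ → En n → ℝ≥0∞}
    (hGm : ∀ j, Measurable (G j)) (h : mixedNorm q P G = 0) (j : ℕ) :
    ∀ᵐ x, G j x = 0 := by
  refine ae_zero_of_rho hPm hP1 (hGm j) fun N => ?_
  have hlt : mixedNorm q P G < (2 * ((N:ℝ≥0∞) + 1))⁻¹ := by
    rw [h]
    exact ENNReal.inv_pos.mpr (by simp [ENNReal.mul_eq_top])
  obtain ⟨m, hm, hmlt⟩ := sInf_lt_iff.mp hlt
  have hjle : sInf {l : ℝ≥0∞ | 0 < l ∧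
      rhoP P (fun x => (G j x / m) / l ^ ((q x)⁻¹).toReal) ≤ 1} < 2 :=
    lt_of_le_of_lt (le_trans (ENNReal.le_tsum j) hm.2) one_lt_two
  obtain ⟨l, hl, hl2⟩ := sInf_lt_iff.mp hjle
  refine le_trans (rhoP_mono fun x => ?_) hl.2
  have hr0 : (0:ℝ) ≤ ((q x)⁻¹).toReal := ENNReal.toReal_nonneg
  have hr1 : ((q x)⁻¹).toReal ≤ 1 := by
    calc ((q x)⁻¹).toReal ≤ (1:ℝ≥0∞).toReal :=
      ENNReal.toReal_mono (by simp) (ENNReal.inv_le_one.mpr (hq1 x))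
    _ = 1 := by simp
  have hlr : l ^ ((q x)⁻¹).toReal ≤ 2 := by
    calc l ^ ((q x)⁻¹).toReal ≤ 2 ^ ((q x)⁻¹).toReal :=
          ENNReal.rpow_le_rpow hl2.le hr0
    _ ≤ 2 ^ (1:ℝ) := ENNReal.rpow_le_rpow_of_exponent_le one_le_two hr1
    _ = 2 := ENNReal.rpow_one 2
  have hminv : 2 * ((N:ℝ≥0∞) + 1) ≤ m⁻¹ := by
    calc 2 * ((N:ℝ≥0∞) + 1) = ((2 * ((N:ℝ≥0∞) + 1))⁻¹)⁻¹ := by rw [inv_inv]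
    _ ≤ m⁻¹ := ENNReal.inv_le_inv' hmlt.le
  have h2 : (2:ℝ≥0∞) * 2⁻¹ = 1 := ENNReal.mul_inv_cancel two_ne_zero ENNReal.ofNat_ne_top
  calc ((N:ℝ≥0∞) + 1) * G j x = G j x * (2 * ((N:ℝ≥0∞) + 1)) * 2⁻¹ := by
        calc ((N:ℝ≥0∞) + 1) * G j x
            = ((N:ℝ≥0∞) + 1) * G j x * (2 * 2⁻¹) := by rw [h2, mul_one]
        _ = G j x * (2 * ((N:ℝ≥0∞) + 1)) * 2⁻¹ := by ring
  _ ≤ G j x * m⁻¹ * (l ^ ((q x)⁻¹).toReal)⁻¹ :=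
        mul_le_mul' (mul_le_mul_right hminv _) (ENNReal.inv_le_inv' hlr)
  _ = (G j x / m) / l ^ ((q x)⁻¹).toReal := by
        rw [div_eq_mul_inv, div_eq_mul_inv]

/-- Core estimate: Hölder inequality with explicit normalising constants. -/
private lemma core10 {p p₁ p₂ q : En n → ℝ≥0∞}
    (hp1 : ∀ x, 1 ≤ p x) (hp₁m : Measurable p₁) (hp₁1 : ∀ x, 1 ≤ p₁ x)
    (hp₂1 : ∀ x, 1 ≤ p₂ x) (hqm : Measurable q)
    (hps : ∀ x, (p x)⁻¹ = (p₁ x)⁻¹ + (p₂ x)⁻¹)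
    {f g : ℕ → En n → ℝ} (hf : ∀ j, Measurable (f j)) (hg : ∀ j, Measurable (g j))
    {a m : ℝ≥0∞} (ha0 : a ≠ 0) (hat : a ≠ ∞) (hm0 : m ≠ 0) (hmt : m ≠ ∞)
    (hfa : ∀ k, rhoP p₁ (fun x => nnAbs (f k) x / a) ≤ 1)
    (hgm : mixedModular q p₂ (fun j x => nnAbs (g j) x / m) ≤ 1) :
    mixedNorm q p (fun j x => ENNReal.ofReal |f j x * g j x|) ≤ 2 * a * m := by
  refine sInf_le ⟨?_, ?_⟩
  · exact pos_iff_ne_zero.mpr (mul_ne_zero (mul_ne_zero two_ne_zero ha0) hm0)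
  · refine le_trans ?_ hgm
    unfold mixedModular
    refine ENNReal.tsum_le_tsum fun j => sInf_le_sInf ?_
    rintro l ⟨hl0, hl1⟩
    refine ⟨hl0, ?_⟩
    have hinv : ((2:ℝ≥0∞) * a * m)⁻¹ = 2⁻¹ * a⁻¹ * m⁻¹ := by
      rw [ENNReal.mul_inv (Or.inl (mul_ne_zero two_ne_zero ha0))
          (Or.inl (ENNReal.mul_ne_top ENNReal.ofNat_ne_top hat)),
        ENNReal.mul_inv (Or.inl two_ne_zero) (Or.inl ENNReal.ofNat_ne_top)]
    have key : ∀ x,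
        omegaP (p x) ((ENNReal.ofReal |f j x * g j x| / (2 * a * m)) / l ^ ((q x)⁻¹).toReal)
        ≤ 2⁻¹ * (omegaP (p₁ x) (nnAbs (f j) x / a)
            + omegaP (p₂ x) ((nnAbs (g j) x / m) / l ^ ((q x)⁻¹).toReal)) := by
      intro x
      have heq : (ENNReal.ofReal |f j x * g j x| / (2 * a * m)) / l ^ ((q x)⁻¹).toReal
          = ((nnAbs (f j) x / a) * ((nnAbs (g j) x / m) / l ^ ((q x)⁻¹).toReal)) / 2 := by
        unfold nnAbs
        rw [abs_mul, ENNReal.ofReal_mul (abs_nonneg _)]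
        simp only [div_eq_mul_inv]
        rw [hinv]
        ring
      rw [heq]
      calc omegaP (p x) (((nnAbs (f j) x / a)
              * ((nnAbs (g j) x / m) / l ^ ((q x)⁻¹).toReal)) / 2)
          ≤ omegaP (p x) ((nnAbs (f j) x / a)
              * ((nnAbs (g j) x / m) / l ^ ((q x)⁻¹).toReal)) / 2 := omegaP_half (hp1 x) _
      _ ≤ (omegaP (p₁ x) (nnAbs (f j) x / a)
            + omegaP (p₂ x) ((nnAbs (g j) x / m) / l ^ ((q x)⁻¹).toReal)) / 2 :=
          ENNReal.div_le_div_right (omegaP_young (hp1 x) (hp₁1 x) (hp₂1 x) (hps x)) 2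
      _ = 2⁻¹ * (omegaP (p₁ x) (nnAbs (f j) x / a)
            + omegaP (p₂ x) ((nnAbs (g j) x / m) / l ^ ((q x)⁻¹).toReal)) := by
          rw [div_eq_mul_inv, mul_comm]
    have hXm : Measurable fun x => nnAbs (f j) x / a :=
      (ENNReal.measurable_ofReal.comp (hf j).abs).div measurable_const
    have hYm : Measurable fun x => (nnAbs (g j) x / m) / l ^ ((q x)⁻¹).toReal :=
      ((ENNReal.measurable_ofReal.comp (hg j).abs).div measurable_const).div
        (measurable_const.pow (ENNReal.measurable_toReal.comp hqm.inv))
    unfold rhoP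
    calc ∫⁻ x, omegaP (p x)
            ((ENNReal.ofReal |f j x * g j x| / (2 * a * m)) / l ^ ((q x)⁻¹).toReal)
        ≤ ∫⁻ x, 2⁻¹ * (omegaP (p₁ x) (nnAbs (f j) x / a)
            + omegaP (p₂ x) ((nnAbs (g j) x / m) / l ^ ((q x)⁻¹).toReal)) :=
          lintegral_mono key
    _ = 2⁻¹ * ∫⁻ x, (omegaP (p₁ x) (nnAbs (f j) x / a)
            + omegaP (p₂ x) ((nnAbs (g j) x / m) / l ^ ((q x)⁻¹).toReal)) :=
          lintegral_const_mul' _ _ (by simp)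
    _ = 2⁻¹ * ((∫⁻ x, omegaP (p₁ x) (nnAbs (f j) x / a))
            + ∫⁻ x, omegaP (p₂ x) ((nnAbs (g j) x / m) / l ^ ((q x)⁻¹).toReal)) := by
          rw [lintegral_add_left (measurable_omegaP hp₁m hXm)]
    _ ≤ 2⁻¹ * (1 + 1) := mul_le_mul_right (add_le_add (hfa j) hl1) _
    _ = 1 := by
          rw [one_add_one_eq_two]
          exact ENNReal.inv_mul_cancel two_ne_zero ENNReal.ofNat_ne_top
end Aux10

/-- Hölder inequality in mixed spaces with a uniform `L^{p₁(·)}` factor. -/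
theorem stmt10 {n : ℕ} (p p₁ p₂ q : En n → ℝ≥0∞)
    (hp : IsExponent p) (hp₁ : IsExponent p₁) (hp₂ : IsExponent p₂) (hq : IsExponent q)
    (hps : ∀ x, (p x)⁻¹ = (p₁ x)⁻¹ + (p₂ x)⁻¹) :
    ∃ c : ℝ≥0∞, c ≠ ∞ ∧ ∀ f g : ℕ → En n → ℝ,
      (∀ j, Measurable (f j)) → (∀ j, Measurable (g j)) →
      mixedNorm q p (fun j x => ENNReal.ofReal |f j x * g j x|) ≤
        c * (⨆ k, luxNorm p₁ (nnAbs (f k))) * mixedNorm q p₂ (fun j => nnAbs (g j)) := by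
  refine ⟨8, by simp, ?_⟩
  intro f g hf hg
  set A := ⨆ k, luxNorm p₁ (nnAbs (f k)) with hA
  set B := mixedNorm q p₂ (fun j => nnAbs (g j)) with hB
  by_cases hA0 : A = 0
  · have hae : ∀ j, ∀ᵐ x, ENNReal.ofReal |f j x * g j x| = 0 := by
      intro j
      have h0 : luxNorm p₁ (nnAbs (f j)) = 0 :=
        le_antisymm (hA0 ▸ le_iSup (fun k => luxNorm p₁ (nnAbs (f k))) j) (zero_le)
      have hmeas : Measurable (nnAbs (f j)) := ENNReal.measurable_ofReal.comp (hf j).abs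
      filter_upwards [ae_zero_of_luxNorm_zero hp₁.1 hp₁.2 hmeas h0] with x hx
      have hfx : f j x = 0 := by
        unfold nnAbs at hx
        rw [ENNReal.ofReal_eq_zero] at hx
        exact abs_eq_zero.mp (le_antisymm hx (abs_nonneg _))
      rw [hfx, zero_mul]
      simp
    rw [mixedNorm_zero_of_ae hp.2 hae]
    exact zero_le
  by_cases hB0 : B = 0
  · have hae : ∀ j, ∀ᵐ x, ENNReal.ofReal |f j x * g j x| = 0 := by
      intro j
      have hmeas : ∀ k, Measurable (nnAbs (g k)) :=
        fun k => ENNReal.measurable_ofReal.comp (hg k).abs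
      filter_upwards [ae_zero_of_mixedNorm_zero hp₂.1 hp₂.2 hq.2 hmeas hB0 j] with x hx
      have hgx : g j x = 0 := by
        unfold nnAbs at hx
        rw [ENNReal.ofReal_eq_zero] at hx
        exact abs_eq_zero.mp (le_antisymm hx (abs_nonneg _))
      rw [hgx, mul_zero]
      simp
    rw [mixedNorm_zero_of_ae hp.2 hae]
    exact zero_le
  by_cases hAt : A = ∞
  · rw [hAt, ENNReal.mul_top (by simp), ENNReal.top_mul hB0]
    exact le_top
  by_cases hBt : B = ∞
  · rw [hBt, ENNReal.mul_top (mul_ne_zero (by simp) hA0)]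
    exact le_top
  have hfa : ∀ k, rhoP p₁ (fun x => nnAbs (f k) x / (2 * A)) ≤ 1 := by
    intro k
    refine rho_div_le_one_of_lt ?_
    calc luxNorm p₁ (nnAbs (f k)) ≤ A := le_iSup (fun k => luxNorm p₁ (nnAbs (f k))) k
    _ < 2 * A := by
        rw [two_mul]
        exact ENNReal.lt_add_right hAt hA0
  have hBlt : B < 2 * B := by
    rw [two_mul]
    exact ENNReal.lt_add_right hBt hB0
  obtain ⟨m, hm, hmlt⟩ := sInf_lt_iff.mp hBlt
  have hm0 : m ≠ 0 := pos_iff_ne_zero.mp hm.1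
  have h2B : 2 * B ≠ ∞ := ENNReal.mul_ne_top ENNReal.ofNat_ne_top hBt
  have hmt : m ≠ ∞ := (hmlt.trans (lt_top_iff_ne_top.mpr h2B)).ne
  have h2A0 : (2:ℝ≥0∞) * A ≠ 0 := mul_ne_zero two_ne_zero hA0
  have h2At : (2:ℝ≥0∞) * A ≠ ∞ := ENNReal.mul_ne_top ENNReal.ofNat_ne_top hAt
  calc mixedNorm q p (fun j x => ENNReal.ofReal |f j x * g j x|)
      ≤ 2 * (2 * A) * m :=
        core10 hp.2 hp₁.1 hp₁.2 hp₂.2 hq.1 hps hf hg h2A0 h2At hm0 hmt hfa hm.2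
  _ ≤ 2 * (2 * A) * (2 * B) := mul_le_mul_right hmlt.le _
  _ = 8 * A * B := by ring
end

section
/- Let α : ℝⁿ → ℝ be locally log-Hölder continuous with constant c_log(α), and let R ≥ c_log(α). Then for all x, y ∈ ℝⁿ and all j, m ∈ ℕ₀, 2^{jα(x)} η_{j,m+R}(x−y) ≤ c · 2^{jα(y)} η_{j,m}(x−y), where c > 0 is independent of x, y, j, m. -/
open MeasureTheory ENNReal Filter
open scoped SchwartzMap FourierTransform

/-- The kernel `η_{j,m}(x) = 2^{jn}(1 + 2^j |x|)^{-m}`. -/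
noncomputable def etaJM (n : ℕ) (j : ℕ) (m : ℝ) (x : En n) : ℝ :=
  (2:ℝ) ^ ((j:ℝ) * (n:ℝ)) * (1 + (2:ℝ) ^ (j:ℝ) * ‖x‖) ^ (-m)

lemma keyAbs (A L Lg B : ℝ) (hLg1 : 1 ≤ Lg) (hLgL : L ≤ Lg)
    (hB0 : 0 ≤ B) (hBAL : A - L ≤ B) : A ≤ Lg * (1 + B) := by
  rcases le_or_gt A L with h | h
  · nlinarith [mul_nonneg (by linarith : (0:ℝ) ≤ Lg) hB0]
  · rcases le_or_gt L 1 with h1 | h1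
    · nlinarith [mul_nonneg (by linarith : (0:ℝ) ≤ Lg - 1) (by linarith : (0:ℝ) ≤ 1 + B)]
    · nlinarith [mul_nonneg (by linarith : (0:ℝ) ≤ Lg - L) (by linarith : (0:ℝ) ≤ 1 + B),
        mul_nonneg (by linarith : (0:ℝ) ≤ L - 1) (by linarith : (0:ℝ) ≤ B - (A - L))]

lemma key2 (j : ℕ) (t : ℝ) (ht : 0 < t) :
    (j:ℝ) * Real.log 2 ≤
      Real.log (Real.exp 1 + 1/t) * (1 + Real.log (1 + (2:ℝ)^(j:ℝ) * t)) := by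
  have hu : (0:ℝ) < (2:ℝ)^(j:ℝ) * t := by positivity
  apply keyAbs _ (Real.log (1/t))
  · rw [Real.le_log_iff_exp_le (by positivity)]
    have := one_div_pos.mpr ht
    linarith
  · apply Real.log_le_log (by positivity)
    have := Real.exp_pos 1; linarith
  · exact Real.log_nonneg (by linarith)
  · have h1 : Real.log ((2:ℝ)^(j:ℝ) * t) = (j:ℝ) * Real.log 2 + Real.log t := by
      rw [Real.log_mul (by positivity) ht.ne', Real.log_rpow two_pos]
    have h2 : Real.log (1/t) = -Real.log t := by
      rw [one_div, Real.log_inv]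
    have h3 : Real.log ((2:ℝ)^(j:ℝ) * t) ≤ Real.log (1 + (2:ℝ)^(j:ℝ) * t) :=
      Real.log_le_log hu (by linarith)
    linarith


/-- moving a variable exponential factor inside the kernel `η`. -/
theorem stmt12 {n : ℕ} (α : En n → ℝ) (cα : ℝ) (hα : LocLogHolder cα α)
    (R : ℝ) (hR : cα ≤ R) :
    ∃ c : ℝ, 0 < c ∧ ∀ x y : En n, ∀ j m : ℕ,
      (2:ℝ) ^ ((j:ℝ) * α x) * etaJM n j ((m:ℝ) + R) (x - y) ≤
        c * ((2:ℝ) ^ ((j:ℝ) * α y) * etaJM n j (m:ℝ) (x - y)) := by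
  obtain ⟨hc, hlog⟩ := hα
  refine ⟨Real.exp cα, Real.exp_pos cα, fun x y j m => ?_⟩
  set t := ‖x - y‖ with htdef
  have ht0 : 0 ≤ t := norm_nonneg _
  by_cases hxy : t = 0
  · -- x = y case
    have hxeq : x = y := by
      rwa [htdef, norm_sub_eq_zero_iff] at hxy
    subst hxeq
    simp only [etaJM, sub_self, norm_zero, mul_zero, add_zero, Real.one_rpow, mul_one]
    have hpos : (0:ℝ) < (2:ℝ) ^ ((j:ℝ) * α x) * ((2:ℝ) ^ ((j:ℝ) * (n:ℝ)) * 1) := by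
      positivity
    nlinarith [Real.one_le_exp hc.le]
  · have ht : 0 < t := lt_of_le_of_ne ht0 (Ne.symm hxy)
    set u := (2:ℝ)^(j:ℝ) * t with hudef
    have hu : 0 < u := by positivity
    have h1u : (1:ℝ) ≤ 1 + u := by linarith
    set Lg := Real.log (Real.exp 1 + 1/t) with hLgdef
    have hLg1 : 1 ≤ Lg := by
      rw [hLgdef]
      rw [Real.le_log_iff_exp_le (by positivity)]
      have := one_div_pos.mpr ht
      linarith
    have hLgpos : 0 < Real.log (Real.exp 1 + 1/t) := by linarith
    have hd := hlog x y
    rw [← htdef] at hd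
    -- core exponent estimate: j * (α x - α y) * log 2 ≤ cα * (1 + log (1+u))
    have hkey := key2 j t ht
    have hexp : (j:ℝ) * (α x - α y) * Real.log 2 ≤ cα * (1 + Real.log (1 + u)) := by
      have hB0 : 0 ≤ 1 + Real.log (1 + u) := by
        have := Real.log_nonneg h1u; linarith
      have step1 : (j:ℝ) * (α x - α y) * Real.log 2 ≤
          ((j:ℝ) * Real.log 2) * |α x - α y| := by
        have h2 : (0:ℝ) ≤ (j:ℝ) * Real.log 2 := by positivity
        calc (j:ℝ) * (α x - α y) * Real.log 2
            ≤ |(j:ℝ) * (α x - α y) * Real.log 2| := le_abs_self _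
          _ = ((j:ℝ) * Real.log 2) * |α x - α y| := by
              rw [abs_mul, abs_mul, abs_of_nonneg (by positivity : (0:ℝ) ≤ (j:ℝ)),
                abs_of_nonneg (Real.log_nonneg one_le_two)]
              ring
      have step2 : ((j:ℝ) * Real.log 2) * |α x - α y| ≤
          ((j:ℝ) * Real.log 2) * (cα / Real.log (Real.exp 1 + 1/t)) :=
        mul_le_mul_of_nonneg_left hd (by positivity)
      have step3 : ((j:ℝ) * Real.log 2) * (cα / Real.log (Real.exp 1 + 1/t)) ≤
          cα * (1 + Real.log (1 + u)) := by
        rw [div_eq_mul_inv]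
        have := mul_le_mul_of_nonneg_right hkey
          (by positivity : (0:ℝ) ≤ cα * (Real.log (Real.exp 1 + 1/t))⁻¹)
        calc ((j:ℝ) * Real.log 2) * (cα * (Real.log (Real.exp 1 + 1/t))⁻¹)
            = ((j:ℝ) * Real.log 2) * (cα * (Real.log (Real.exp 1 + 1/t))⁻¹) := rfl
          _ ≤ (Real.log (Real.exp 1 + 1/t) * (1 + Real.log (1 + u))) *
              (cα * (Real.log (Real.exp 1 + 1/t))⁻¹) := this
          _ = cα * (1 + Real.log (1 + u)) := by
              rw [show Lg * (1 + Real.log (1 + (2:ℝ)^(j:ℝ) * t)) * (cα * Lg⁻¹)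
                  = (Lg * Lg⁻¹) * (cα * (1 + Real.log (1 + (2:ℝ)^(j:ℝ) * t))) from by ring,
                mul_inv_cancel₀ hLgpos.ne', one_mul, ← hudef]
      linarith
    -- 2^{j(αx - αy)} ≤ exp cα * (1+u)^R
    have hpow : (2:ℝ) ^ ((j:ℝ) * (α x - α y)) ≤ Real.exp cα * (1 + u) ^ R := by
      have e1 : (2:ℝ) ^ ((j:ℝ) * (α x - α y)) =
          Real.exp ((j:ℝ) * (α x - α y) * Real.log 2) := by
        rw [Real.rpow_def_of_pos two_pos]; ring_nf
      have e2 : Real.exp cα * (1 + u) ^ (cα:ℝ) =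
          Real.exp (cα * (1 + Real.log (1 + u))) := by
        rw [Real.rpow_def_of_pos (by linarith : (0:ℝ) < 1 + u), ← Real.exp_add]
        ring_nf
      have e3 : (1 + u) ^ (cα:ℝ) ≤ (1 + u) ^ R :=
        Real.rpow_le_rpow_of_exponent_le h1u hR
      calc (2:ℝ) ^ ((j:ℝ) * (α x - α y))
          = Real.exp ((j:ℝ) * (α x - α y) * Real.log 2) := e1
        _ ≤ Real.exp (cα * (1 + Real.log (1 + u))) := Real.exp_le_exp.mpr hexp
        _ = Real.exp cα * (1 + u) ^ (cα:ℝ) := e2.symm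
        _ ≤ Real.exp cα * (1 + u) ^ R := by
            exact mul_le_mul_of_nonneg_left e3 (Real.exp_pos cα).le
    -- now put everything together
    have hsplit : (1 + u) ^ (-((m:ℝ) + R)) = (1 + u) ^ (-(m:ℝ)) * (1 + u) ^ (-R) := by
      rw [← Real.rpow_add (by linarith : (0:ℝ) < 1 + u)]; ring_nf
    have hx2 : (2:ℝ) ^ ((j:ℝ) * α x) =
        (2:ℝ) ^ ((j:ℝ) * α y) * (2:ℝ) ^ ((j:ℝ) * (α x - α y)) := by
      rw [← Real.rpow_add two_pos]; ring_nf
    have hposR : (0:ℝ) < (1 + u) ^ R := Real.rpow_pos_of_pos (by linarith) R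
    have hkeypow : (2:ℝ) ^ ((j:ℝ) * (α x - α y)) * (1 + u) ^ (-R) ≤ Real.exp cα := by
      rw [Real.rpow_neg (by linarith : (0:ℝ) ≤ 1 + u)]
      rw [mul_inv_le_iff₀ hposR] at *
      calc (2:ℝ) ^ ((j:ℝ) * (α x - α y)) ≤ Real.exp cα * (1 + u) ^ R := hpow
        _ = Real.exp cα * (1 + u) ^ R := rfl
      
    unfold etaJM
    rw [← htdef, ← hudef, hsplit, hx2]
    have hA : (0:ℝ) < (2:ℝ) ^ ((j:ℝ) * α y) := Real.rpow_pos_of_pos two_pos _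
    have hB : (0:ℝ) < (2:ℝ) ^ ((j:ℝ) * (n:ℝ)) := Real.rpow_pos_of_pos two_pos _
    have hC : (0:ℝ) < (1 + u) ^ (-(m:ℝ)) := Real.rpow_pos_of_pos (by linarith) _
    calc (2:ℝ) ^ ((j:ℝ) * α y) * (2:ℝ) ^ ((j:ℝ) * (α x - α y)) *
          ((2:ℝ) ^ ((j:ℝ) * (n:ℝ)) * ((1+u) ^ (-(m:ℝ)) * (1+u) ^ (-R)))
        = ((2:ℝ) ^ ((j:ℝ) * (α x - α y)) * (1+u) ^ (-R)) *
          ((2:ℝ) ^ ((j:ℝ) * α y) * ((2:ℝ) ^ ((j:ℝ) * (n:ℝ)) * (1+u) ^ (-(m:ℝ)))) := by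
          ring
      _ ≤ Real.exp cα *
          ((2:ℝ) ^ ((j:ℝ) * α y) * ((2:ℝ) ^ ((j:ℝ) * (n:ℝ)) * (1+u) ^ (-(m:ℝ)))) := by
          apply mul_le_mul_of_nonneg_right hkeypow (by positivity)
end
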